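/- Let u : ℂ → ℂ be analytic on an open set U avoiding the points 0 and 1, and suppose u satisfies the confluent Heun equation u'' + (γ/z + δ/(z-1) + ε) u' + (αz - q)/(z(z-1)) u = 0 on U. Define v(z) = z^γ (z-1)^δ u'(z) (using fixed branches of the powers on U). Then v satisfies on U the equation v'' + ((1-γ)/z + (1-δ)/(z-1) + ε - 1/(z - z₀)) v' + Π(z)/(z(z-1)(z - z₀)) v = 0, where z₀ = q/α (assuming α ≠ 0 and z₀ ∉ U) and Π(z) = (α - (δ+γ-1)ε) z² + (γε - z₀(2α + ε(2-δ-γ))) z + z₀(z₀α + ε - γε). -/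

import Mathlib

open Complex

private lemma confluentHeun_auxA (γ δ ε α w z : ℂ) (hz0' : z ≠ 0)
    (hz1' : z - 1 ≠ 0) (hzz' : z - w ≠ 0) :
    ((α - (δ + γ - 1) * ε) * z ^ 2
        + (γ * ε - w * (2 * α + ε * (2 - δ - γ))) * z
        + w * (w * α + ε - γ * ε)) / (z * (z - 1) * (z - w))
      = ((1 - γ) / z + (1 - δ) / (z - 1) + ε - 1 / (z - w)) * ε - ε ^ 2
        + α * (z - w) / (z * (z - 1)) := by
  field_simp
  ring

set_option maxHeartbeats 1000000 in
private lemma confluentHeun_auxB (γ δ ε α w z : ℂ) (hz0' : z ≠ 0)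
    (hz1' : z - 1 ≠ 0) (hzz' : z - w ≠ 0) :
    ε * (α * (z - w) / (z * (z - 1)))
      - (-(α * w) / z ^ 2 + (α * w - α) / (z - 1) ^ 2)
      - (γ / z + δ / (z - 1)) * (α * (z - w) / (z * (z - 1)))
      - ((1 - γ) / z + (1 - δ) / (z - 1) + ε - 1 / (z - w))
          * (α * (z - w) / (z * (z - 1))) = 0 := by
  field_simp
  ring

set_option maxHeartbeats 1000000 in
/-- If `u` solves the confluent Heun equation on an open set `U` avoiding `0`, `1` and
`z₀ = q/α`, and `v = z^γ (z-1)^δ u'` (with `f`, `g` fixed analytic branches of `z^γ`,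
`(z-1)^δ` characterized by their logarithmic derivatives), then `v` solves Eq. (3). -/
theorem confluentHeun_derivative_equation
    (γ δ ε α q : ℂ) (hα : α ≠ 0) (U : Set ℂ) (hU : IsOpen U)
    (h0 : (0 : ℂ) ∉ U) (h1 : (1 : ℂ) ∉ U) (hz0 : q / α ∉ U)
    (u f g : ℂ → ℂ)
    (hu : AnalyticOnNhd ℂ u U)
    (hf : AnalyticOnNhd ℂ f U) (hg : AnalyticOnNhd ℂ g U)
    (hfne : ∀ z ∈ U, f z ≠ 0) (hgne : ∀ z ∈ U, g z ≠ 0)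
    (hf' : ∀ z ∈ U, deriv f z = γ * f z / z)
    (hg' : ∀ z ∈ U, deriv g z = δ * g z / (z - 1))
    (hode : ∀ z ∈ U,
      deriv (deriv u) z + (γ / z + δ / (z - 1) + ε) * deriv u z
        + (α * z - q) / (z * (z - 1)) * u z = 0)
    (v : ℂ → ℂ) (hv : ∀ z, v z = f z * g z * deriv u z) :
    ∀ z ∈ U,
      deriv (deriv v) z
        + ((1 - γ) / z + (1 - δ) / (z - 1) + ε - 1 / (z - q / α)) * deriv v z
        + ((α - (δ + γ - 1) * ε) * z ^ 2
            + (γ * ε - (q / α) * (2 * α + ε * (2 - δ - γ))) * z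
            + (q / α) * ((q / α) * α + ε - γ * ε))
          / (z * (z - 1) * (z - q / α)) * v z = 0 := by
  have hveq : v = fun w => f w * g w * deriv u w := funext hv
  have key1 : ∀ w ∈ U, deriv v w
      = f w * g w * (-ε * deriv u w - (α * w - q) / (w * (w - 1)) * u w) := by
    intro w hw
    have hw0 : w ≠ 0 := fun h => h0 (h ▸ hw)
    have hw1 : w - 1 ≠ 0 := sub_ne_zero.2 fun h => h1 (h ▸ hw)
    have hfd := (hf w hw).differentiableAt
    have hgd := (hg w hw).differentiableAt
    have hud := (hu.deriv w hw).differentiableAt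
    have h2 : deriv (deriv u) w
        = -((γ / w + δ / (w - 1) + ε) * deriv u w)
          - (α * w - q) / (w * (w - 1)) * u w := by
      linear_combination hode w hw
    rw [hveq, deriv_fun_mul (c := fun y => f y * g y) (hfd.mul hgd) hud, deriv_fun_mul hfd hgd,
      hf' w hw, hg' w hw, h2]
    field_simp
    ring
  intro z hz
  have hz0' : z ≠ 0 := fun h => h0 (h ▸ hz)
  have hz1' : z - 1 ≠ 0 := sub_ne_zero.2 fun h => h1 (h ▸ hz)
  have hzz' : z - q / α ≠ 0 := sub_ne_zero.2 fun h => hz0 (h ▸ hz)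
  have hfd := (hf z hz).differentiableAt
  have hgd := (hg z hz).differentiableAt
  have hud0 := (hu z hz).differentiableAt
  have hud1 := (hu.deriv z hz).differentiableAt
  have key2 : deriv (deriv v) z
      = deriv (fun w => f w * g w
          * (-ε * deriv u w - (α * w - q) / (w * (w - 1)) * u w)) z := by
    apply Filter.EventuallyEq.deriv_eq
    filter_upwards [hU.mem_nhds hz] with w hw using key1 w hw
  have hQd : HasDerivAt (fun w : ℂ => (α * w - q) / (w * (w - 1)))
      (-q / z ^ 2 + (q - α) / (z - 1) ^ 2) z := by
    have h1d : HasDerivAt (fun w : ℂ => α * w - q) α z := by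
      simpa using ((hasDerivAt_id z).const_mul α).sub_const q
    have h2d : HasDerivAt (fun w : ℂ => w * (w - 1)) ((z - 1) + z) z := by
      have := (hasDerivAt_id' z).mul ((hasDerivAt_id' z).sub_const 1)
      exact this.congr_deriv (by ring)
    have hder := h1d.fun_div h2d (mul_ne_zero hz0' hz1')
    have heq : -q / z ^ 2 + (q - α) / (z - 1) ^ 2
        = (α * (z * (z - 1)) - (α * z - q) * ((z - 1) + z)) / (z * (z - 1)) ^ 2 := by
      field_simp
      ring
    rw [heq]
    convert hder using 1
  have hhd : HasDerivAt (fun w => -ε * deriv u w - (α * w - q) / (w * (w - 1)) * u w)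
      (-ε * deriv (deriv u) z -
        ((-q / z ^ 2 + (q - α) / (z - 1) ^ 2) * u z
          + (α * z - q) / (z * (z - 1)) * deriv u z)) z :=
    (hud1.hasDerivAt.const_mul (-ε)).sub (hQd.mul hud0.hasDerivAt)
  have hEd : HasDerivAt (fun w => f w * g w
        * (-ε * deriv u w - (α * w - q) / (w * (w - 1)) * u w))
      ((deriv f z * g z + f z * deriv g z)
          * (-ε * deriv u z - (α * z - q) / (z * (z - 1)) * u z)
        + f z * g z * (-ε * deriv (deriv u) z -
            ((-q / z ^ 2 + (q - α) / (z - 1) ^ 2) * u z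
              + (α * z - q) / (z * (z - 1)) * deriv u z))) z :=
    (hfd.hasDerivAt.mul hgd.hasDerivAt).mul hhd
  have hv2 := key2.trans hEd.deriv
  have h2 : deriv (deriv u) z
      = -((γ / z + δ / (z - 1) + ε) * deriv u z)
        - (α * z - q) / (z * (z - 1)) * u z := by
    linear_combination hode z hz
  rw [hv2, key1 z hz, hv z, hf' z hz, hg' z hz, h2]
  have hq : q = α * (q / α) := by field_simp
  rw [hq, mul_div_cancel_left₀ _ hα]
  linear_combination (f z * g z * deriv u z)
        * confluentHeun_auxA γ δ ε α (q / α) z hz0' hz1' hzz'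
    + (f z * g z * u z)
        * confluentHeun_auxB γ δ ε α (q / α) z hz0' hz1' hzz'
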